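/- Let q be an odd prime power and let G be an orthogonal polarity graph of a projective plane of order q (so G has q^2 + q + 1 vertices, the polarity has exactly q+1 absolute points, and the adjacency matrix of the graph with loops added at absolute points has eigenvalues q+1 with multiplicity 1 and ±√q otherwise). Then the independence number of G satisfies α(G) ≤ q^{3/2} + q^{1/2} + 1. -/

import Mathlib

open Finset Matrix

set_option maxHeartbeats 1000000 in
/-- Let `G` be an orthogonal polarity graph of a projective plane of order
`q`: `G` has `q^2 + q + 1` vertices, there is a set `L` of `q + 1` absolute points, the
graph with loops added at `L` is `(q+1)`-regular, and the matrix `M` of `G` with loops at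
`L` has all eigenvalues in `{q+1, √q, -√q}` with `q+1` of multiplicity one. Then every
independent set of `G` has size at most `q^{3/2} + q^{1/2} + 1`. -/
theorem stmt_17 {p k : ℕ} (hp : p.Prime) (hpodd : Odd p) (hk : 0 < k)
    (q : ℕ) (hq : q = p ^ k)
    {V : Type*} [Fintype V] [DecidableEq V]
    (G : SimpleGraph V) [DecidableRel G.Adj]
    (hV : Fintype.card V = q ^ 2 + q + 1)
    (L : Finset V) (hL : L.card = q + 1)
    (hreg : ∀ v : V, G.degree v + (if v ∈ L then 1 else 0) = q + 1)
    (M : Matrix V V ℝ)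
    (hM : M = G.adjMatrix ℝ + Matrix.diagonal (fun v => if v ∈ L then 1 else 0))
    (heig : ∀ μ : ℝ, Module.End.HasEigenvalue M.mulVecLin μ →
      μ = q + 1 ∨ μ = Real.sqrt q ∨ μ = -Real.sqrt q)
    (htop : Module.End.HasEigenvalue M.mulVecLin ((q : ℝ) + 1))
    (hmult : Module.finrank ℝ (Module.End.eigenspace M.mulVecLin ((q : ℝ) + 1)) = 1) :
    ∀ I : Finset V, (∀ u ∈ I, ∀ v ∈ I, ¬ G.Adj u v) →
      (I.card : ℝ) ≤ (q : ℝ) * Real.sqrt q + Real.sqrt q + 1 := by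
  intro I hI
  set t := Real.sqrt q with htdef
  have ht0 : 0 ≤ t := Real.sqrt_nonneg _
  have ht2 : t ^ 2 = q := Real.sq_sqrt (by positivity)
  have hq0 : (0:ℝ) ≤ q := by positivity
  -- symmetry of M
  have hsym : ∀ i j, M i j = M j i := by
    intro i j
    rw [hM]
    simp only [Matrix.add_apply, SimpleGraph.adjMatrix_apply, Matrix.diagonal_apply]
    have hadj : G.Adj i j ↔ G.Adj j i := G.adj_comm i j
    by_cases h : i = j
    · subst h; rfl
    · simp [h, Ne.symm h, hadj]
  have hH : M.IsHermitian := by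
    ext i j
    simp only [Matrix.conjTranspose_apply, star_trivial]
    exact hsym j i
  -- row sums of M are q+1
  have hrowsum : ∀ w, ∑ u, M w u = (q:ℝ)+1 := by
    intro w
    rw [hM]
    simp only [Matrix.add_apply, Finset.sum_add_distrib]
    have h1 : ∑ u, (G.adjMatrix ℝ) w u = (G.degree w : ℝ) := by
      simp [SimpleGraph.adjMatrix_apply, Finset.sum_ite_mem, Finset.univ_inter,
        SimpleGraph.neighborFinset_eq_filter]
      rw [SimpleGraph.degree]
      simp [SimpleGraph.neighborFinset_eq_filter]
    have h2 : ∑ u, Matrix.diagonal (fun v => if v ∈ L then (1:ℝ) else 0) w u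
        = (if w ∈ L then (1:ℝ) else 0) := by
      rw [Finset.sum_eq_single w]
      · simp
      · intro u _ hu; simp [Matrix.diagonal_apply, Ne.symm hu]
      · intro h; exact absurd (Finset.mem_univ w) h
    rw [h1, h2]
    have hw := hreg w
    by_cases hwL : w ∈ L <;> simp [hwL] at hw ⊢ <;> exact_mod_cast hw
  -- the all-ones vector
  set u0 : V → ℝ := fun _ => 1 with hu0def
  have hu0eig : M.mulVecLin u0 = ((q:ℝ)+1) • u0 := by
    funext w
    show ∑ u, M w u * u0 u = ((q:ℝ)+1) * u0 w
    simp only [hu0def, mul_one]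
    exact hrowsum w
  have hu0mem : u0 ∈ Module.End.eigenspace M.mulVecLin ((q:ℝ)+1) :=
    Module.End.mem_eigenspace_iff.2 hu0eig
  have hVpos : 0 < Fintype.card V := by omega
  obtain ⟨v0⟩ := Fintype.card_pos_iff.mp hVpos
  have hu0ne : u0 ≠ 0 := by
    intro h
    have := congrFun h v0
    simp [hu0def] at this
  -- the eigenspace of q+1 is the span of u0
  have hspan : Submodule.span ℝ {u0} = Module.End.eigenspace M.mulVecLin ((q:ℝ)+1) := by
    refine Submodule.eq_of_le_of_finrank_eq ?_ ?_
    · rw [Submodule.span_le, Set.singleton_subset_iff]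
      exact hu0mem
    · exact (finrank_span_singleton hu0ne).trans hmult.symm
  -- eigenbasis
  set b := hH.eigenvectorBasis with hbdef
  set μ := hH.eigenvalues with hμdef
  set T : EuclideanSpace ℝ V →ₗ[ℝ] EuclideanSpace ℝ V := Matrix.toEuclideanLin M with hTdef
  have hT : ∀ (y : EuclideanSpace ℝ V) (w : V), T y w = ∑ u, M w u * y u := fun y w => rfl
  have hTb : ∀ j, T (b j) = μ j • b j := by
    intro j
    ext w
    rw [hT, PiLp.smul_apply, smul_eq_mul]
    simpa [Matrix.mulVec, dotProduct] using congrFun (hH.mulVec_eigenvectorBasis j) w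
  have hbfun : ∀ j, (fun w => b j w : V → ℝ) ∈ Module.End.eigenspace M.mulVecLin (μ j) := by
    intro j
    rw [Module.End.mem_eigenspace_iff]
    funext w
    show ∑ u, M w u * b j u = μ j * b j w
    rw [← hT (b j) w, hTb j, PiLp.smul_apply, smul_eq_mul]
  have hbne : ∀ j, (fun w => b j w : V → ℝ) ≠ 0 := by
    intro j h
    exact b.orthonormal.ne_zero j (by ext w; exact congrFun h w)
  have hμval : ∀ j, μ j = (q:ℝ)+1 ∨ μ j = t ∨ μ j = -t := by
    intro j
    exact heig _ (Module.End.hasEigenvalue_of_hasEigenvector ⟨hbfun j, hbne j⟩)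
  -- swap lemma for the bilinear form
  have hswap : ∀ a c : EuclideanSpace ℝ V,
      (inner ℝ (T a) c : ℝ) = inner ℝ a (T c) := by
    intro a c
    simp only [PiLp.inner_apply, RCLike.inner_apply, conj_trivial]
    simp_rw [hT]
    simp_rw [Finset.sum_mul, Finset.mul_sum]
    rw [Finset.sum_comm]
    refine Finset.sum_congr rfl fun v _ => Finset.sum_congr rfl fun u _ => ?_
    rw [hsym v u]; ring
  -- inner of eigenvector with T applied to anything
  have hinner : ∀ j (y : EuclideanSpace ℝ V),
      (inner ℝ (b j) (T y) : ℝ) = μ j * inner ℝ (b j) y := by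
    intro j y
    rw [← hswap (b j) y, hTb j, real_inner_smul_left]
  -- the independent set indicator vector
  set x : EuclideanSpace ℝ V := WithLp.toLp 2 (fun v => if v ∈ I then (1:ℝ) else 0) with hxdef
  set c : V → ℝ := fun j => inner ℝ (b j) x with hcdef
  set s : ℝ := (I.card : ℝ) with hsdef
  have hs0 : 0 ≤ s := by positivity
  -- Parseval
  have hpar : ∑ j, c j * c j = (inner ℝ x x : ℝ) := by
    rw [← b.sum_inner_mul_inner x x]
    refine Finset.sum_congr rfl fun j _ => ?_
    show (inner ℝ (b j) x : ℝ) * inner ℝ (b j) x = inner ℝ x (b j) * inner ℝ (b j) x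
    rw [real_inner_comm x (b j)]
  -- quadratic form expansion
  have hqf : (inner ℝ x (T x) : ℝ) = ∑ j, μ j * (c j * c j) := by
    rw [← b.sum_inner_mul_inner x (T x)]
    refine Finset.sum_congr rfl fun j _ => ?_
    show (inner ℝ x (b j) : ℝ) * inner ℝ (b j) (T x) = μ j * ((inner ℝ (b j) x : ℝ) * inner ℝ (b j) x)
    rw [hinner j x, real_inner_comm x (b j)]
    ring
  -- norm of x
  have hxx : (inner ℝ x x : ℝ) = s := by
    simp only [PiLp.inner_apply, RCLike.inner_apply, conj_trivial, hxdef]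
    have : ∀ v, (if v ∈ I then (1:ℝ) else 0) * (if v ∈ I then (1:ℝ) else 0)
        = if v ∈ I then (1:ℝ) else 0 := fun v => by by_cases h : v ∈ I <;> simp [h]
    rw [Finset.sum_congr rfl fun v _ => this v, Finset.sum_ite_mem, Finset.univ_inter,
      Finset.sum_const, hsdef, nsmul_eq_mul, mul_one]
  -- quadratic form value is at most q+1
  have hxMx : (inner ℝ x (T x) : ℝ) ≤ (q:ℝ) + 1 := by
    have hentry : ∀ v ∈ I, ∀ u ∈ I,
        M v u = if v = u then (if v ∈ L then (1:ℝ) else 0) else 0 := by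
      intro v hv u hu
      rw [hM]
      simp only [Matrix.add_apply, SimpleGraph.adjMatrix_apply, Matrix.diagonal_apply]
      have : ¬ G.Adj v u := hI v hv u hu
      by_cases h : v = u <;> simp [this, h]
    have hval : (inner ℝ x (T x) : ℝ) = ∑ v ∈ I, (if v ∈ L then (1:ℝ) else 0) := by
      simp only [PiLp.inner_apply, RCLike.inner_apply, conj_trivial, hxdef]
      simp_rw [hT]
      rw [Finset.sum_congr rfl (fun v _ => by
        rw [mul_ite, mul_one, mul_zero] :
        ∀ v ∈ Finset.univ, (∑ u, M v u * (if u ∈ I then (1:ℝ) else 0)) * (if v ∈ I then (1:ℝ) else 0)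
          = if v ∈ I then (∑ u, M v u * (if u ∈ I then (1:ℝ) else 0)) else 0)]
      rw [Finset.sum_ite_mem, Finset.univ_inter]
      refine Finset.sum_congr rfl fun v hv => ?_
      simp_rw [mul_ite, mul_one, mul_zero]
      rw [Finset.sum_ite_mem, Finset.univ_inter]
      rw [Finset.sum_congr rfl (hentry v hv)]
      rw [Finset.sum_ite_eq I v (fun _ => if v ∈ L then (1:ℝ) else 0)]
      simp [hv]
    rw [hval]
    calc ∑ v ∈ I, (if v ∈ L then (1:ℝ) else 0)
        ≤ ∑ v ∈ L, (1:ℝ) := by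
          rw [Finset.sum_ite_mem]
          exact Finset.sum_le_sum_of_subset_of_nonneg Finset.inter_subset_right
            (by intros; norm_num)
      _ = (q:ℝ) + 1 := by rw [Finset.sum_const, hL]; push_cast; ring
  -- u0 as an element of Euclidean space
  set u0E : EuclideanSpace ℝ V := WithLp.toLp 2 (fun _ => (1:ℝ)) with hu0Edef
  have hTu0 : T u0E = ((q:ℝ)+1) • u0E := by
    ext w
    rw [hT, PiLp.smul_apply, smul_eq_mul]
    simp only [hu0Edef, mul_one]
    exact hrowsum w
  -- find the index of the top eigenvector
  have hex : ∃ j0, (inner ℝ (b j0) u0E : ℝ) ≠ 0 := by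
    by_contra h
    push_neg at h
    have hrep : b.repr u0E = 0 := by
      ext j
      rw [b.repr_apply_apply]
      exact h j
    have h0 : u0E = 0 := b.repr.map_eq_zero_iff.mp hrep
    have := congrFun (congrArg (fun (f : EuclideanSpace ℝ V) => (f : V → ℝ)) h0) v0
    simp [hu0Edef] at this
  obtain ⟨j0, hj0⟩ := hex
  have hμj0 : μ j0 = (q:ℝ)+1 := by
    have h1 : μ j0 * (inner ℝ (b j0) u0E : ℝ) = ((q:ℝ)+1) * (inner ℝ (b j0) u0E : ℝ) := by
      rw [← hinner j0 u0E, hTu0, real_inner_smul_right]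
    exact mul_right_cancel₀ hj0 h1
  -- b j0 is a multiple of u0
  have hmem : (fun w => b j0 w : V → ℝ) ∈ Submodule.span ℝ {u0} := by
    rw [hspan, ← hμj0]
    exact hbfun j0
  obtain ⟨cc, hcc⟩ := Submodule.mem_span_singleton.mp hmem
  set N : ℝ := (Fintype.card V : ℝ) with hNdef
  have hNval : N = (q:ℝ)^2 + q + 1 := by rw [hNdef, hV]; push_cast; ring
  have hbj0 : ∀ w, b j0 w = cc := by
    intro w
    have := congrFun hcc w
    simp only [hu0def, hu0Edef, Pi.smul_apply, smul_eq_mul, mul_one] at this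
    simpa [hu0Edef] using this.symm
  -- cc^2 * N = 1
  have hccN : cc * cc * N = 1 := by
    have hn : (inner ℝ (b j0) (b j0) : ℝ) = 1 := by
      rw [real_inner_self_eq_norm_mul_norm, b.orthonormal.1 j0]
      norm_num
    rw [PiLp.inner_apply] at hn
    simp only [RCLike.inner_apply, conj_trivial] at hn
    rw [Finset.sum_congr rfl (fun w _ => by rw [hbj0 w])] at hn
    rw [Finset.sum_const, Finset.card_univ, nsmul_eq_mul] at hn
    rw [hNdef]
    linarith [hn]
  -- c j0 = cc * s
  have hcj0 : c j0 = cc * s := by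
    rw [hcdef]
    simp only
    rw [PiLp.inner_apply]
    simp only [RCLike.inner_apply, conj_trivial, hxdef]
    rw [Finset.sum_congr rfl (fun w _ => by rw [hbj0 w])]
    simp_rw [ite_mul, one_mul, zero_mul]
    rw [Finset.sum_ite_mem, Finset.univ_inter, Finset.sum_const, hsdef, nsmul_eq_mul]
    exact mul_comm _ _
  -- lower bound for the quadratic form
  have hterm : ∀ j, 0 ≤ (μ j + t) * (c j * c j) := by
    intro j
    apply mul_nonneg _ (mul_self_nonneg _)
    rcases hμval j with h | h | h <;> rw [h] <;> linarith
  have hsingle : (μ j0 + t) * (c j0 * c j0) ≤ ∑ j, (μ j + t) * (c j * c j) :=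
    Finset.single_le_sum (fun j _ => hterm j) (Finset.mem_univ j0)
  have hsum : ∑ j, (μ j + t) * (c j * c j) = ∑ j, μ j * (c j * c j) + t * s := by
    rw [← hxx, ← hpar, Finset.mul_sum, ← Finset.sum_add_distrib]
    exact Finset.sum_congr rfl fun j _ => by ring
  -- combine everything
  have hmain : ((q:ℝ)+1+t) * (cc * cc * (s * s)) - t * s ≤ (q:ℝ) + 1 := by
    have h1 : (μ j0 + t) * (c j0 * c j0) ≤ ∑ j, μ j * (c j * c j) + t * s := by
      rw [← hsum]; exact hsingle
    rw [hμj0, hcj0] at h1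
    have h2 : ∑ j, μ j * (c j * c j) ≤ (q:ℝ) + 1 := by rw [← hqf]; exact hxMx
    nlinarith [h1, h2]
  -- key polynomial inequality
  have hkey : ((q:ℝ)+1+t) * (s * s) ≤ ((q:ℝ)+1+t*s) * N := by
    have h3 : ((q:ℝ)+1+t)*(cc*cc*(s*s)) ≤ (q:ℝ)+1+t*s := by linarith [hmain]
    have hN0 : (0:ℝ) ≤ N := by rw [hNval]; positivity
    calc ((q:ℝ)+1+t)*(s*s) = (((q:ℝ)+1+t)*(cc*cc*(s*s)))*N := by
          linear_combination (-(((q:ℝ)+1+t)*(s*s)))*hccN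
      _ ≤ ((q:ℝ)+1+t*s)*N := mul_le_mul_of_nonneg_right h3 hN0
  -- conclude
  rw [hNval] at hkey
  have hqt : (q:ℝ) = t^2 := ht2.symm
  rw [hqt] at hkey ⊢
  by_contra hcon
  push_neg at hcon
  have hX1 : 0 < (s - (t^2*t + t + 1)) * (s + t^2 + 1) := by
    apply mul_pos (by linarith)
    nlinarith [sq_nonneg t]
  have hX2 : 0 ≤ t * ((t^2+1) * (t^2-t+2)) := by
    apply mul_nonneg ht0
    nlinarith [sq_nonneg (2*t-1), sq_nonneg t]
  have hpos : (0:ℝ) < t^2+t+1 := by positivity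
  have hfac : ((t^2:ℝ)+1+t*s)*((t^2)^2+t^2+1) - (t^2+1+t)*(s*s)
      = (t^2+t+1)*(((t^2*t+t+1) - s)*(s+t^2+1) - t*((t^2+1)*(t^2-t+2))) := by ring
  have h5 : 0 ≤ (t^2+t+1)*(((t^2*t+t+1) - s)*(s+t^2+1) - t*((t^2+1)*(t^2-t+2))) := by
    rw [← hfac]; linarith [hkey]
  have h6 : 0 ≤ ((t^2*t+t+1) - s)*(s+t^2+1) - t*((t^2+1)*(t^2-t+2)) := by
    by_contra h6n
    push_neg at h6n
    nlinarith [h5, mul_pos hpos (neg_pos.mpr h6n)]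
  have h7 : ((t^2*t+t+1) - s)*(s+t^2+1) = -((s - (t^2*t+t+1))*(s+t^2+1)) := by ring
  linarith [h6, hX1, hX2, h7.le, h7.ge]
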